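/- arXiv:1401.6204 — 4 statements merged into one kernel-verified Lean document; each statement's English description precedes it below -/
import Mathlib

section
/- Let A, B, C > 0 be real constants and let h : [0,∞) → [0,∞) be continuous, non-decreasing, with h(0) = 0. Assume that for every t ≥ 0, if t + h(t) ≤ 1/(2B) then h(t) ≤ 2·C·A·B²·(t + h(t))². Set ε₀ := min(1/(4B), 1/(16·A·B²·C)). Then h(t) ≤ ε₀ for every t ∈ [0, ε₀). -/
theorem bootstrap_bound (A B C : ℝ) (hA : 0 < A) (hB : 0 < B) (hC : 0 < C)
    (h : ℝ → ℝ) (hcont : ContinuousOn h (Set.Ici 0))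
    (hmono : MonotoneOn h (Set.Ici 0))
    (hnonneg : ∀ t, 0 ≤ t → 0 ≤ h t)
    (h0 : h 0 = 0)
    (hineq : ∀ t, 0 ≤ t → t + h t ≤ 1 / (2 * B) →
      h t ≤ 2 * C * A * B ^ 2 * (t + h t) ^ 2) :
    ∀ t, 0 ≤ t → t < min (1 / (4 * B)) (1 / (16 * A * B ^ 2 * C)) →
      h t ≤ min (1 / (4 * B)) (1 / (16 * A * B ^ 2 * C)) := by
  intro t ht0 htlt
  set ε : ℝ := min (1 / (4 * B)) (1 / (16 * A * B ^ 2 * C)) with hεdef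
  have hεpos : 0 < ε := lt_min (by positivity) (by positivity)
  have hε1 : ε ≤ 1 / (4 * B) := min_le_left _ _
  have hε2 : ε ≤ 1 / (16 * A * B ^ 2 * C) := min_le_right _ _
  have h16 : ε * (16 * A * B ^ 2 * C) ≤ 1 := by
    rw [← le_div_iff₀ (by positivity)]; exact hε2
  have hKε : 2 * C * A * B ^ 2 * ε ≤ 1 / 8 := by nlinarith
  have hεB : ε * (4 * B) ≤ 1 := by
    rw [← le_div_iff₀ (by positivity)]; exact hε1
  -- f is continuous on [0, t]
  have hsub : Set.Icc (0:ℝ) t ⊆ Set.Ici 0 := fun x hx => hx.1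
  have hfcont : ContinuousOn (fun s => s + h s) (Set.Icc 0 t) :=
    (continuousOn_id.add (hcont.mono hsub))
  -- claim: t + h t ≤ 3/2 * ε
  have hkey : t + h t ≤ 3 / 2 * ε := by
    by_contra hgt
    push_neg at hgt
    have h0f : (fun s => s + h s) 0 = 0 := by simp [h0]
    have hmem : (3 / 2 * ε) ∈ Set.Icc ((fun s => s + h s) 0) ((fun s => s + h s) t) := by
      rw [h0f]
      exact ⟨by positivity, le_of_lt hgt⟩
    obtain ⟨c, hc, hfc'⟩ := intermediate_value_Icc ht0 hfcont hmem
    have hfc : c + h c = 3 / 2 * ε := hfc'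
    have hc0 : 0 ≤ c := hc.1
    have hcle : c ≤ t := hc.2
    have hfcB : c + h c ≤ 1 / (2 * B) := by
      rw [hfc, le_div_iff₀ (by positivity)]
      nlinarith
    have := hineq c hc0 hfcB
    rw [hfc] at this
    -- h c = 3/2 ε - c > 1/2 ε since c ≤ t < ε
    have hhc : h c = 3 / 2 * ε - c := by linarith
    nlinarith [htlt]
  -- now apply hineq at t
  have hfB : t + h t ≤ 1 / (2 * B) := by
    rw [le_div_iff₀ (by positivity)]
    nlinarith
  have hfinal := hineq t ht0 hfB
  have hfnn : 0 ≤ t + h t := by have := hnonneg t ht0; linarith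
  nlinarith [sq_nonneg (t + h t), sq_nonneg ε]
end

section
/- Let n ≥ 3 be an integer, let ν > 0, and let f : ℝ → ℝ be real-analytic on (−ν, ν) with f(0) = 0 and f not identically zero on any neighborhood of 0. Assume that for all t in some neighborhood of 0 one has 1 + 2t²f(t) − ((n−2)/2)·t³f'(t) ≥ (1 − (n/2)·t³f'(t))^{(n−2)/n}. Then there exists t̃ > 0 such that f(t) > 0 for all t ∈ (0, t̃). -/
open Filter Real

lemma rpow_lower_bound {α s : ℝ} (hα0 : 0 ≤ α) (hα1 : α ≤ 1) (hs : |s| ≤ 1/2) :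
    1 + α * s - s ^ 2 ≤ (1 + s) ^ α := by
  rw [abs_le] at hs
  have hu : (0:ℝ) < 1 + s := by linarith
  have h1 : ((1+s)⁻¹) ^ α * (1:ℝ) ^ (1-α) ≤ α * (1+s)⁻¹ + (1-α) * 1 :=
    Real.geom_mean_le_arith_mean2_weighted hα0 (by linarith) (by positivity) zero_le_one
      (by ring)
  rw [Real.one_rpow, mul_one, mul_one, Real.inv_rpow hu.le] at h1
  have hpos : 0 < (1+s) ^ α := Real.rpow_pos_of_pos hu α
  have h2 : 1 ≤ (α * (1+s)⁻¹ + (1-α)) * (1+s) ^ α := by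
    have := mul_le_mul_of_nonneg_right h1 hpos.le
    rwa [inv_mul_cancel₀ hpos.ne'] at this
  have h3 : (1+s) ≤ (α + (1-α)*(1+s)) * (1+s) ^ α := by
    have h := mul_le_mul_of_nonneg_left h2 hu.le
    have e : (1+s) * ((α * (1+s)⁻¹ + (1-α)) * (1+s) ^ α)
        = (α + (1-α)*(1+s)) * (1+s) ^ α := by
      field_simp
    rw [e] at h
    linarith
  have hA : 0 < α + (1-α)*(1+s) := by nlinarith
  have hb : 0 ≤ s^2 * ((1 - α*(1-α)) + (1-α)*s) := by
    refine mul_nonneg (sq_nonneg s) ?_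
    nlinarith [sq_nonneg (2*α-1), mul_nonneg (sub_nonneg.2 hα1) (by linarith : (0:ℝ) ≤ s + 1/2)]
  have h4 : (1 + α*s - s^2) * (α + (1-α)*(1+s)) ≤ 1 + s := by nlinarith [hb]
  nlinarith [h3, h4, hA, hpos]

theorem eventually_pos_of_analytic (n : ℕ) (hn : 3 ≤ n) (ν : ℝ) (hν : 0 < ν)
    (f : ℝ → ℝ) (hf : AnalyticOnNhd ℝ f (Set.Ioo (-ν) ν)) (hf0 : f 0 = 0)
    (hfne : ¬ ∀ᶠ t in nhds (0 : ℝ), f t = 0)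
    (hineq : ∀ᶠ t in nhds (0 : ℝ),
      (1 - (n : ℝ) / 2 * t ^ 3 * deriv f t) ^ (((n : ℝ) - 2) / (n : ℝ)) ≤
        1 + 2 * t ^ 2 * f t - ((n : ℝ) - 2) / 2 * t ^ 3 * deriv f t) :
    ∃ t₀ : ℝ, 0 < t₀ ∧ ∀ t : ℝ, 0 < t → t < t₀ → 0 < f t := by
  have h0 : AnalyticAt ℝ f 0 := hf 0 ⟨by linarith, hν⟩
  have hne : analyticOrderAt f 0 ≠ ⊤ := fun h => hfne (analyticOrderAt_eq_top.mp h)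
  obtain ⟨k, hk'⟩ := WithTop.ne_top_iff_exists.mp hne
  have hk : analyticOrderAt f 0 = (k : ℕ∞) := hk'.symm
  obtain ⟨g, hg, hg0, heq⟩ := (h0.analyticOrderAt_eq_natCast (n := k)).mp hk
  simp only [sub_zero, smul_eq_mul] at heq
  have hk0 : k ≠ 0 := by
    intro h
    subst h
    have := heq.self_of_nhds
    simp [hf0] at this
    exact hg0 this.symm
  obtain ⟨m, rfl⟩ := Nat.exists_eq_succ_of_ne_zero hk0
  simp only [Nat.succ_eq_add_one] at heq
  have hn3 : (3:ℝ) ≤ (n:ℝ) := by exact_mod_cast hn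
  have hn0 : (n:ℝ) ≠ 0 := by linarith
  set α : ℝ := ((n:ℝ) - 2) / n with hα
  have hα0 : 0 ≤ α := div_nonneg (by linarith) (by linarith)
  have hα1 : α ≤ 1 := by rw [hα, div_le_one (by linarith)]; linarith
  have hdg : AnalyticAt ℝ (deriv g) 0 :=
    ((ContinuousLinearMap.apply ℝ ℝ (1:ℝ)).analyticAt _).comp hg.fderiv
  have hgc : ContinuousAt g 0 := hg.continuousAt
  have hdgc : ContinuousAt (deriv g) 0 := hdg.continuousAt
  -- derivative formula near 0
  have hderiv : ∀ᶠ t in nhds (0:ℝ),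
      deriv f t = ((m:ℝ)+1) * t^m * g t + t^(m+1) * deriv g t := by
    have heq' : f =ᶠ[nhds (0:ℝ)] fun z => z^(m+1) * g z := heq
    have h1 : deriv f =ᶠ[nhds (0:ℝ)] deriv (fun s => s^(m+1) * g s) := heq'.deriv
    filter_upwards [h1, hg.eventually_analyticAt] with t ht hat
    rw [ht, deriv_fun_mul (differentiableAt_pow _) hat.differentiableAt, deriv_pow_field]
    simp only [Nat.add_sub_cancel]
    push_cast
    ring
  -- smallness of n/2 * t^3 * deriv f t
  have hct : ContinuousAt (fun t : ℝ =>
      (n:ℝ)/2 * t^3 * (((m:ℝ)+1) * t^m * g t + t^(m+1) * deriv g t)) 0 := by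
    fun_prop
  have hx : Tendsto (fun t : ℝ => (n:ℝ)/2 * t^3 * deriv f t) (nhds 0) (nhds 0) := by
    have h2 := hct.tendsto
    norm_num at h2
    exact h2.congr' (hderiv.mono fun t ht => by simp [ht])
  have hsm : ∀ᶠ t in nhds (0:ℝ), |(n:ℝ)/2 * t^3 * deriv f t| ≤ 1/2 := by
    have := hx (Metric.closedBall_mem_nhds (0:ℝ) (by norm_num : (0:ℝ) < 1/2))
    filter_upwards [this] with t ht
    rw [Set.mem_preimage, Metric.mem_closedBall, Real.dist_eq, sub_zero] at ht
    linarith [ht]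
  -- main inequality: 0 ≤ 2 t² f + (n/2 t³ f')²
  have hmain : ∀ᶠ t in nhds (0:ℝ),
      0 ≤ 2 * t^2 * f t + ((n:ℝ)/2 * t^3 * deriv f t)^2 := by
    filter_upwards [hineq, hsm] with t h1 h2
    set s : ℝ := -((n:ℝ)/2 * t^3 * deriv f t) with hs
    have habs : |s| ≤ 1/2 := by rwa [hs, abs_neg]
    have hkey : 1 + α * s - s ^ 2 ≤ (1 + s) ^ α := rpow_lower_bound hα0 hα1 habs
    have he1 : (1:ℝ) + s = 1 - (n:ℝ)/2 * t^3 * deriv f t := by rw [hs]; ring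
    rw [he1] at hkey
    have hαs : α * s = -(((n:ℝ)-2)/2 * t^3 * deriv f t) := by
      rw [hα, hs]
      field_simp
    have hs2 : s^2 = ((n:ℝ)/2 * t^3 * deriv f t)^2 := by rw [hs]; ring
    rw [hαs, hs2] at hkey
    linarith [le_trans hkey h1]
  -- pass to g on the right half-line
  have hψ : ∀ᶠ t in nhdsWithin (0:ℝ) (Set.Ioi 0),
      0 ≤ 2 * g t + ((n:ℝ)/2)^2 * t^(m+3) * (((m:ℝ)+1) * g t + t * deriv g t)^2 := by
    filter_upwards [eventually_nhdsWithin_of_eventually_nhds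
      (hmain.and (heq.and hderiv)), self_mem_nhdsWithin] with t h ht
    obtain ⟨h1, h2, h3⟩ := h
    have htpos : (0:ℝ) < t := ht
    have hid : 2 * t^2 * f t + ((n:ℝ)/2 * t^3 * deriv f t)^2
        = t^(m+3) * (2 * g t + ((n:ℝ)/2)^2 * t^(m+3) * (((m:ℝ)+1) * g t + t * deriv g t)^2) := by
      rw [h2, h3]; ring
    rw [hid] at h1
    nlinarith [h1, pow_pos htpos (m+3)]
  -- take the limit t → 0⁺
  have hg00 : 0 ≤ 2 * g 0 := by
    have hψc : ContinuousAt (fun t : ℝ =>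
        2 * g t + ((n:ℝ)/2)^2 * t^(m+3) * (((m:ℝ)+1) * g t + t * deriv g t)^2) 0 := by
      fun_prop
    have h0v : ((fun t : ℝ =>
        2 * g t + ((n:ℝ)/2)^2 * t^(m+3) * (((m:ℝ)+1) * g t + t * deriv g t)^2) 0) = 2 * g 0 := by
      simp
    have ht := hψc.tendsto.mono_left (nhdsWithin_le_nhds (s := Set.Ioi (0:ℝ)))
    rw [show (2 * g 0 + ((n:ℝ)/2)^2 * 0^(m+3) * (((m:ℝ)+1) * g 0 + 0 * deriv g 0)^2) = 2 * g 0
      from by rw [zero_pow (by omega : m+3 ≠ 0)]; ring] at ht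
    exact ge_of_tendsto ht hψ
  have hgpos : 0 < g 0 := lt_of_le_of_ne (by linarith) (Ne.symm hg0)
  have hev : ∀ᶠ t in nhds (0:ℝ), g t ∈ Set.Ioi (0:ℝ) ∧ f t = t^(m+1) * g t :=
    (hgc.eventually_mem (Ioi_mem_nhds hgpos)).and heq
  obtain ⟨ε, hε, hball⟩ := Metric.eventually_nhds_iff.mp hev
  refine ⟨ε, hε, fun t ht htε => ?_⟩
  obtain ⟨h1, h2⟩ := hball (show dist t 0 < ε by
    rw [Real.dist_eq, sub_zero, abs_of_pos ht]; exact htε)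
  rw [h2]
  exact mul_pos (pow_pos ht _) h1
end

section
/- Let S be a nonempty compact metric space, let ν > 0, and let F : S × [0, ν] → ℝ be continuous. Assume that for every φ ∈ S there exists t_φ ∈ (0, ν] such that F(φ, t) > 0 for all t ∈ (0, t_φ) and F(φ, t) < 0 for all t ∈ (t_φ, ν). Then there exists ν₂ ∈ (0, ν] such that F(φ, t) > 0 for every φ ∈ S and every t ∈ (0, ν₂). -/
theorem uniform_positivity (S : Type*) [MetricSpace S] [CompactSpace S] [Nonempty S]
    (ν : ℝ) (hν : 0 < ν) (F : S × ℝ → ℝ)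
    (hF : ContinuousOn F (Set.univ ×ˢ Set.Icc 0 ν))
    (hwell : ∀ φ : S, ∃ tφ : ℝ, 0 < tφ ∧ tφ ≤ ν ∧
      (∀ t : ℝ, 0 < t → t < tφ → 0 < F (φ, t)) ∧
      (∀ t : ℝ, tφ < t → t < ν → F (φ, t) < 0)) :
    ∃ ν₂ : ℝ, 0 < ν₂ ∧ ν₂ ≤ ν ∧ ∀ (φ : S) (t : ℝ), 0 < t → t < ν₂ → 0 < F (φ, t) := by
  by_contra h
  push_neg at h
  choose T hT1 hT2 hT3 hT4 using hwell
  have H : ∀ n : ℕ, ∃ φ t, 0 < t ∧ t < min ν (1 / (n + 1)) ∧ F (φ, t) ≤ 0 := by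
    intro n
    obtain ⟨φ, t, ht0, htν, hFt⟩ := h (min ν (1 / (n + 1)))
      (lt_min hν (by positivity)) (min_le_left _ _)
    exact ⟨φ, t, ht0, htν, hFt⟩
  choose φ t ht0 htn hFt using H
  -- t n → 0
  have htend : Filter.Tendsto t Filter.atTop (nhds 0) := by
    apply squeeze_zero (fun n => (ht0 n).le)
      (fun n => le_trans (htn n).le (min_le_right _ _))
    exact tendsto_one_div_add_atTop_nhds_zero_nat
  -- key : T (φ n) ≤ t n
  have key : ∀ n, T (φ n) ≤ t n := by
    intro n
    by_contra hlt
    push_neg at hlt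
    exact absurd (hT3 (φ n) (t n) (ht0 n) hlt) (not_lt.mpr (hFt n))
  -- compactness: subsequence
  obtain ⟨a, -, g, hg_mono, hg⟩ :=
    isCompact_univ.tendsto_subseq (fun n => Set.mem_univ (φ n))
  set s : ℝ := T a / 2 with hs_def
  have hs0 : 0 < s := half_pos (hT1 a)
  have hsT : s < T a := half_lt_self (hT1 a)
  have hsν : s < ν := lt_of_lt_of_le hsT (hT2 a)
  have hFas : 0 < F (a, s) := hT3 a s hs0 hsT
  -- continuity along the subsequence
  have hmem : (a, s) ∈ (Set.univ ×ˢ Set.Icc 0 ν : Set (S × ℝ)) :=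
    ⟨Set.mem_univ _, hs0.le, hsν.le⟩
  have htendF : Filter.Tendsto (fun k => F (φ (g k), s)) Filter.atTop (nhds (F (a, s))) := by
    apply (hF (a, s) hmem).tendsto.comp
    rw [tendsto_nhdsWithin_iff]
    constructor
    · exact hg.prodMk_nhds tendsto_const_nhds
    · exact Filter.Eventually.of_forall fun k => ⟨Set.mem_univ _, hs0.le, hsν.le⟩
  have hev1 : ∀ᶠ k in Filter.atTop, 0 < F (φ (g k), s) :=
    htendF.eventually (eventually_gt_nhds hFas)
  have hev2 : ∀ᶠ k in Filter.atTop, t (g k) < s :=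
    (htend.comp hg_mono.tendsto_atTop).eventually (eventually_lt_nhds hs0)
  obtain ⟨k, hk1, hk2⟩ := (hev1.and hev2).exists
  have : F (φ (g k), s) < 0 :=
    hT4 (φ (g k)) s (lt_of_le_of_lt (key (g k)) hk2) hsν
  linarith
end

section
/- Let H be a real Hilbert space and let T : H → H be a compact self-adjoint bounded linear operator such that ‖u‖² − ⟨T u, u⟩ ≥ 0 for every u ∈ H. Let N := ker(Id − T). Then there exists c > 0 such that ‖u‖² − ⟨T u, u⟩ ≥ c·‖Π_{N^⊥}(u)‖² for every u ∈ H, where Π_{N^⊥} denotes the orthogonal projection of H onto the orthogonal complement N^⊥ of N. -/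
open scoped RealInnerProductSpace
open Filter Topology

theorem spectral_gap_of_compact_selfadjoint (H : Type*) [NormedAddCommGroup H]
    [InnerProductSpace ℝ H] [CompleteSpace H] (T : H →L[ℝ] H)
    (hTcomp : IsCompactOperator T) (hTsa : IsSelfAdjoint T)
    (hTpos : ∀ u : H, 0 ≤ ‖u‖ ^ 2 - ⟪T u, u⟫) :
    ∃ c : ℝ, 0 < c ∧ ∀ u : H,
      c * ‖(Submodule.orthogonalProjectionOnto (LinearMap.ker ((ContinuousLinearMap.id ℝ H - T : H →L[ℝ] H) : H →ₗ[ℝ] H))ᗮ u : H)‖ ^ 2 ≤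
        ‖u‖ ^ 2 - ⟪T u, u⟫ := by
  set S : H →L[ℝ] H := ContinuousLinearMap.id ℝ H - T with hSdef
  have hNclosed : IsClosed ((LinearMap.ker (S : H →ₗ[ℝ] H) : Submodule ℝ H) : Set H) :=
    ContinuousLinearMap.isClosed_ker S
  haveI : CompleteSpace (LinearMap.ker (S : H →ₗ[ℝ] H) : Submodule ℝ H) := hNclosed.completeSpace_coe
  -- S is symmetric
  have hSsa : IsSelfAdjoint S := by
    have h1 : IsSelfAdjoint (ContinuousLinearMap.id ℝ H) := by
      rw [ContinuousLinearMap.isSelfAdjoint_iff_isSymmetric]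
      intro x y
      simp
    exact h1.sub hTsa
  have hSsymm : ∀ x y : H, ⟪S x, y⟫ = ⟪x, S y⟫ := by
    have := ContinuousLinearMap.isSelfAdjoint_iff_isSymmetric.mp hSsa
    exact fun x y => this x y
  -- quadratic form identity
  have hQ : ∀ u : H, ⟪S u, u⟫ = ‖u‖ ^ 2 - ⟪T u, u⟫ := by
    intro u
    simp only [hSdef, ContinuousLinearMap.sub_apply, ContinuousLinearMap.id_apply,
      inner_sub_left, real_inner_self_eq_norm_sq]
  have hSpos : ∀ u : H, 0 ≤ ⟪S u, u⟫ := fun u => (hQ u) ▸ hTpos u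
  -- key Cauchy–Schwarz type inequality for the positive operator S
  have hkey : ∀ x : H, ‖S x‖ ^ 2 ≤ ‖S‖ * ⟪S x, x⟫ := by
    intro x
    set y := S x with hy
    have hquad : ∀ t : ℝ, 0 ≤ ⟪S y, y⟫ * (t * t) + (2 * ⟪S x, y⟫) * t + ⟪S x, x⟫ := by
      intro t
      have h := hSpos (x + t • y)
      have hyx : ⟪S y, x⟫ = ⟪S x, y⟫ := by
        rw [hSsymm y x, real_inner_comm]
      calc (0:ℝ) ≤ ⟪S (x + t • y), x + t • y⟫ := h
        _ = ⟪S y, y⟫ * (t * t) + (2 * ⟪S x, y⟫) * t + ⟪S x, x⟫ := by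
            simp only [map_add, map_smul, inner_add_left, inner_add_right,
              real_inner_smul_left, real_inner_smul_right]
            rw [hyx]; ring
    have hdisc := discrim_le_zero hquad
    rw [discrim] at hdisc
    have hxy : ⟪S x, y⟫ = ‖S x‖ ^ 2 := by rw [hy, real_inner_self_eq_norm_sq]
    have hyy : ⟪S y, y⟫ ≤ ‖S‖ * ‖S x‖ ^ 2 := by
      calc ⟪S y, y⟫ ≤ ‖S y‖ * ‖y‖ := real_inner_le_norm _ _
        _ ≤ (‖S‖ * ‖y‖) * ‖y‖ := by
            have := S.le_opNorm y
            nlinarith [norm_nonneg y]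
        _ = ‖S‖ * ‖S x‖ ^ 2 := by rw [hy]; ring
    rcases eq_or_lt_of_le (norm_nonneg (S x)) with h0 | h0
    · nlinarith [hSpos x, norm_nonneg S]
    · have h4 : (‖S x‖ ^ 2) ^ 2 ≤ (‖S‖ * ‖S x‖ ^ 2) * ⟪S x, x⟫ := by
        nlinarith [hSpos x]
      have hpos : (0:ℝ) < ‖S x‖ ^ 2 := by positivity
      nlinarith
  -- reduction: the quadratic form only sees the projection onto (LinearMap.ker (S : H →ₗ[ℝ] H))ᗮ
  have hproj : ∀ u : H, ⟪S u, u⟫ = ⟪S (Submodule.orthogonalProjectionOnto (LinearMap.ker (S : H →ₗ[ℝ] H))ᗮ u : H), (Submodule.orthogonalProjectionOnto (LinearMap.ker (S : H →ₗ[ℝ] H))ᗮ u : H)⟫ := by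
    intro u
    set p : H := (Submodule.orthogonalProjectionOnto (LinearMap.ker (S : H →ₗ[ℝ] H))ᗮ u : H) with hp
    have hmem : u - p ∈ (LinearMap.ker (S : H →ₗ[ℝ] H))ᗮᗮ := Submodule.sub_starProjection_mem_orthogonal u
    rw [Submodule.orthogonal_orthogonal] at hmem
    have hSw : S (u - p) = 0 := hmem
    have hSu : S u = S p := by
      have h := map_sub S u p
      rw [hSw] at h
      exact (sub_eq_zero.mp h.symm)
    have hortho : ⟪S p, u - p⟫ = 0 := by
      rw [hSsymm p (u - p), hSw, inner_zero_right]
    calc ⟪S u, u⟫ = ⟪S p, (u - p) + p⟫ := by rw [hSu, sub_add_cancel]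
      _ = ⟪S p, u - p⟫ + ⟪S p, p⟫ := inner_add_right _ _ _
      _ = ⟪S p, p⟫ := by rw [hortho, zero_add]
  -- main argument by contradiction
  by_contra hcon
  push_neg at hcon
  -- build a sequence of unit vectors in (LinearMap.ker (S : H →ₗ[ℝ] H))ᗮ with small quadratic form
  have hseq : ∀ n : ℕ, ∃ v : H, v ∈ (LinearMap.ker (S : H →ₗ[ℝ] H))ᗮ ∧ ‖v‖ = 1 ∧ ⟪S v, v⟫ < 1 / (n + 1) := by
    intro n
    have hcpos : (0:ℝ) < 1 / (n + 1) := by positivity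
    obtain ⟨u, hu⟩ := hcon (1 / (n + 1)) hcpos
    rw [← hQ] at hu
    set p : H := (Submodule.orthogonalProjectionOnto (LinearMap.ker (S : H →ₗ[ℝ] H))ᗮ u : H) with hp
    rw [hproj u] at hu
    have hu' : ⟪S p, p⟫ < 1 / (n + 1) * ‖p‖ ^ 2 := hu
    have hpne : p ≠ 0 := by
      intro h0
      rw [h0] at hu'
      simp at hu'
    have hpnorm : (0:ℝ) < ‖p‖ := norm_pos_iff.mpr hpne
    refine ⟨‖p‖⁻¹ • p, Submodule.smul_mem _ _ (Submodule.orthogonalProjectionOnto (LinearMap.ker (S : H →ₗ[ℝ] H))ᗮ u).2, ?_, ?_⟩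
    · rw [norm_smul, norm_inv, norm_norm, inv_mul_cancel₀ hpnorm.ne']
    · have hexp : ⟪S (‖p‖⁻¹ • p), ‖p‖⁻¹ • p⟫ = ‖p‖⁻¹ * (‖p‖⁻¹ * ⟪S p, p⟫) := by
        rw [map_smul, real_inner_smul_left, real_inner_smul_right]
      rw [hexp]
      have hip : (0:ℝ) < ‖p‖⁻¹ := by positivity
      have h3 : ‖p‖⁻¹ * (‖p‖⁻¹ * ⟪S p, p⟫) < ‖p‖⁻¹ * (‖p‖⁻¹ * (1 / (n + 1) * ‖p‖ ^ 2)) :=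
        mul_lt_mul_of_pos_left (mul_lt_mul_of_pos_left hu' hip) hip
      have h4 : ‖p‖⁻¹ * (‖p‖⁻¹ * (1 / (n + 1) * ‖p‖ ^ 2)) = 1 / (n + 1) := by
        field_simp
      rw [h4] at h3
      exact h3
  choose v hvmem hvnorm hvsmall using hseq
  -- the quadratic form values tend to zero, so ‖S (v n)‖ → 0
  have hSv0 : Tendsto (fun n => S (v n)) atTop (𝓝 0) := by
    rw [tendsto_zero_iff_norm_tendsto_zero]
    have hsq : Tendsto (fun n : ℕ => ‖S (v n)‖ ^ 2) atTop (𝓝 0) := by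
      refine squeeze_zero (g := fun n : ℕ => ‖S‖ * (1 / (n + 1)))
        (fun n => by positivity) (fun n => ?_) ?_
      · calc ‖S (v n)‖ ^ 2 ≤ ‖S‖ * ⟪S (v n), v n⟫ := hkey (v n)
          _ ≤ ‖S‖ * (1 / (n + 1)) := by
              have := hvsmall n
              nlinarith [norm_nonneg S, hSpos (v n)]
      · have := tendsto_one_div_add_atTop_nhds_zero_nat (𝕜 := ℝ)
        simpa using this.const_mul ‖S‖
    have : Tendsto (fun n : ℕ => Real.sqrt (‖S (v n)‖ ^ 2)) atTop (𝓝 (Real.sqrt 0)) :=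
      (Real.continuous_sqrt.tendsto 0).comp hsq
    simpa [Real.sqrt_sq (norm_nonneg _)] using this
  -- compactness: extract a convergent subsequence of T (v n)
  obtain ⟨K, hKcomp, hKsub⟩ := hTcomp.image_closedBall_subset_compact 1
  have hTvK : ∀ n, T (v n) ∈ K := by
    intro n
    apply hKsub
    exact ⟨v n, by simp [Metric.mem_closedBall, hvnorm n, dist_zero_right], rfl⟩
  obtain ⟨y, _, φ, hφmono, hφtend⟩ := hKcomp.tendsto_subseq hTvK
  -- the subsequence v (φ n) converges to y
  have hvtend : Tendsto (fun n => v (φ n)) atTop (𝓝 y) := by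
    have hid : ∀ m : ℕ, v m = S (v m) + T (v m) := by
      intro m
      simp [hSdef, ContinuousLinearMap.sub_apply]
    have h1 : Tendsto (fun n => S (v (φ n))) atTop (𝓝 0) :=
      hSv0.comp hφmono.tendsto_atTop
    have h2 : Tendsto (fun n => S (v (φ n)) + T (v (φ n))) atTop (𝓝 (0 + y)) :=
      h1.add hφtend
    rw [zero_add] at h2
    exact h2.congr (fun n => (hid (φ n)).symm)
  -- y has norm 1
  have hynorm : ‖y‖ = 1 := by
    have := (continuous_norm.tendsto y).comp hvtend
    have h1 : Tendsto (fun n : ℕ => (1:ℝ)) atTop (𝓝 ‖y‖) :=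
      this.congr (fun n => by simp [Function.comp, hvnorm (φ n)])
    exact (tendsto_nhds_unique tendsto_const_nhds h1).symm
  -- y ∈ (LinearMap.ker (S : H →ₗ[ℝ] H))ᗮ
  have hymem : y ∈ (LinearMap.ker (S : H →ₗ[ℝ] H))ᗮ := by
    have hclosed : IsClosed ((LinearMap.ker (S : H →ₗ[ℝ] H))ᗮ : Set H) := Submodule.isClosed_orthogonal (LinearMap.ker (S : H →ₗ[ℝ] H))
    exact hclosed.mem_of_tendsto hvtend (Eventually.of_forall fun n => hvmem (φ n))
  -- S y = 0, so y ∈ N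
  have hSy : S y = 0 := by
    have h1 : Tendsto (fun n => S (v (φ n))) atTop (𝓝 (S y)) :=
      (S.continuous.tendsto y).comp hvtend
    have h2 : Tendsto (fun n => S (v (φ n))) atTop (𝓝 0) :=
      hSv0.comp hφmono.tendsto_atTop
    exact tendsto_nhds_unique h1 h2
  have hyN : y ∈ LinearMap.ker (S : H →ₗ[ℝ] H) := hSy
  -- contradiction: y ∈ N ∩ (LinearMap.ker (S : H →ₗ[ℝ] H))ᗮ with ‖y‖ = 1
  have : ⟪y, y⟫ = 0 := (Submodule.mem_orthogonal (LinearMap.ker (S : H →ₗ[ℝ] H)) y).mp hymem y hyN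
  rw [real_inner_self_eq_norm_sq, hynorm] at this
  norm_num at this
end
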